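/- Let G be a finite group, n a positive integer, and let pa = (pa_d)_{d|n} be a distribution of virtual partial augmentations of order n for G (satisfying conditions (V1)–(V4)). For a divisor m of n, define pa^{n/m} by (pa^{n/m})_d = pa_{d·n/m} for d | m. Then for every ordinary character χ of G (or Brauer character modulo a prime not dividing n) and every integer l: μ(ζ_m^l, pa^{n/m}, χ) = Σ_{ξ : ξ^{n/m} = ζ_m^l} μ(ξ, pa, χ). -/

import Mathlib

open scoped Classical
noncomputable section

/-- A fixed primitive `n`-th root of unity in `ℂ`. -/
def zetaC (n : ℕ) : ℂ := Complex.exp (2 * Real.pi * Complex.I / n)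

/-- The cyclotomic field `ℚ(ζ_m)` as a subfield of `ℂ`. -/
def cycF (m : ℕ) : IntermediateField ℚ ℂ := IntermediateField.adjoin ℚ {zetaC m}

/-- Trace from `ℚ(ζ_m)` down to `ℚ` of a complex number lying in `ℚ(ζ_m)`
(junk value `0` otherwise). -/
def trQ (m : ℕ) (z : ℂ) : ℚ :=
  if h : z ∈ cycF m then Algebra.trace ℚ (cycF m) ⟨z, h⟩ else 0

variable {G : Type} [Group G] [Fintype G]

/-- The sum of the values of `f` over a set of representatives of the conjugacy
classes of `G`. -/
def classSum {R : Type} [AddCommMonoid R] (f : G → R) : R :=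
  ∑ c : ConjClasses G, f c.out

/-- The Luthar–Passi "multiplicity" of `ξ` attached to a list `pa` of class functions
(indexed by naturals; only indices dividing `n` matter) and a character `χ`. -/
def muLP (n : ℕ) (pa : ℕ → G → ℤ) (χ : G → ℂ) (ξ : ℂ) : ℂ :=
  (n : ℂ)⁻¹ * ∑ c : ConjClasses G, ∑ d ∈ n.divisors,
    (pa d c.out : ℂ) * (trQ (n / d) (χ c.out * ξ ^ (-(d : ℤ))) : ℚ)

/-- `χ` is the character of a finite-dimensional complex representation of `G`. -/
def IsOrdChar (χ : G → ℂ) : Prop :=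
  ∃ (m : ℕ) (ρ : Representation ℂ G (Fin m → ℂ)), ∀ g, χ g = LinearMap.trace ℂ _ (ρ g)

/-- `χ` is a Brauer character of `G` modulo the prime `p`: on `p`-regular elements it
is the sum of fixed lifts (to complex roots of unity) of the eigenvalues of a
representation of `G` over the algebraic closure of `𝔽_p`. -/
def IsBrauerChar (p : ℕ) (hp : p.Prime) (χ : G → ℂ) : Prop :=
  haveI : Fact p.Prime := ⟨hp⟩
  ∃ (m : ℕ) (ρ : G →* Matrix.GeneralLinearGroup (Fin m) (AlgebraicClosure (ZMod p)))
    (φ : (AlgebraicClosure (ZMod p))ˣ →* ℂˣ),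
    (∀ ζ : (AlgebraicClosure (ZMod p))ˣ, orderOf (φ ζ) = orderOf ζ) ∧
    ∀ g : G, ¬ p ∣ orderOf g →
      χ g = (((ρ g : Matrix (Fin m) (Fin m) (AlgebraicClosure (ZMod p))).charpoly.roots).map
        (fun r => if h : r = 0 then 0 else (φ (Units.mk0 r h) : ℂ))).sum

/-- `pa` is a distribution of virtual partial augmentations of order `n` for `G`:
integer-valued class functions indexed by the divisors of `n` satisfying (V1)–(V4). -/
def IsVPA (n : ℕ) (pa : ℕ → G → ℤ) : Prop :=
  (∀ d, d ∣ n → ∀ g h : G, IsConj g h → pa d g = pa d h) ∧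
  -- (V1)
  (∀ d, d ∣ n → classSum (pa d) = 1) ∧
  -- (V2)
  (∀ d, d ∣ n → d ≠ n → pa d 1 = 0) ∧
  -- (V3)
  (∀ d, d ∣ n → ∀ g : G, ¬ orderOf g ∣ n / d → pa d g = 0) ∧
  -- (V4) for ordinary characters
  (∀ χ : G → ℂ, IsOrdChar χ → ∀ l : ℤ, ∃ k : ℕ, muLP n pa χ (zetaC n ^ l) = k) ∧
  -- (V4) for Brauer characters modulo primes not dividing `n`
  (∀ p (hp : p.Prime), ¬ p ∣ n → ∀ χ : G → ℂ, IsBrauerChar p hp χ →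
    ∀ l : ℤ, ∃ k : ℕ, muLP n pa χ (zetaC n ^ l) = k)

/-- `pa` is the distribution of partial augmentations of an actual element of `G`
of order `n`. -/
def IsTPA (n : ℕ) (pa : ℕ → G → ℤ) : Prop :=
  ∃ g₀ : G, orderOf g₀ = n ∧
    ∀ d, d ∣ n → ∀ h : G, pa d h = if IsConj (g₀ ^ d) h then 1 else 0

/-- Accumulated virtual partial augmentation at `m`: the sum of `f` over
representatives of the conjugacy classes of elements of order `m`. -/
def accPA (f : G → ℤ) (m : ℕ) : ℤ :=
  ∑ c : ConjClasses G, if orderOf c.out = m then f c.out else 0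


lemma zetaC_ne_zero (n : ℕ) : zetaC n ≠ 0 := Complex.exp_ne_zero _
lemma zetaC_prim (n : ℕ) (hn : n ≠ 0) : IsPrimitiveRoot (zetaC n) n :=
  Complex.isPrimitiveRoot_exp n hn
lemma zetaC_mem (n : ℕ) : zetaC n ∈ cycF n :=
  IntermediateField.mem_adjoin_simple_self ℚ (zetaC n)
lemma zetaC_pow_dvd {n d : ℕ} (hn : n ≠ 0) (hd : d ≠ 0) (h : d ∣ n) :
    zetaC n ^ d = zetaC (n / d) := by
  obtain ⟨e, rfl⟩ := h
  have hd' : (d : ℂ) ≠ 0 := Nat.cast_ne_zero.2 hd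
  have he : e ≠ 0 := by rintro rfl; simp at hn
  have he' : (e : ℂ) ≠ 0 := Nat.cast_ne_zero.2 he
  unfold zetaC
  rw [← Complex.exp_nat_mul, Nat.mul_div_cancel_left e (Nat.pos_of_ne_zero hd)]
  congr 1
  field_simp
  push_cast
  ring

lemma trace_sum_lemma {n m k : ℕ} (hn : n ≠ 0) (hm : m ≠ 0) (hk : k ≠ 0)
    (hnmk : n = m * k) {d : ℕ} (hd : d ∣ n) (hd0 : d ≠ 0) (z : ℂ) (l : ℤ) :
    ∑ j ∈ Finset.range k, trQ (n / d) (z * zetaC n ^ (-((l + m * j) * d))) =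
      (if k ∣ d then (k : ℚ) else 0) * trQ (n / d) (z * zetaC n ^ (-(l * d))) := by
  set N := n / d with hNdef
  have hNpos : 0 < N := Nat.div_pos (Nat.le_of_dvd (Nat.pos_of_ne_zero hn) hd)
    (Nat.pos_of_ne_zero hd0)
  have hNd : N * d = n := Nat.div_mul_cancel hd
  set g : ℂ := zetaC N with hg
  have hg0 : g ≠ 0 := zetaC_ne_zero N
  have hgm : g ∈ cycF N := zetaC_mem N
  have hprim : IsPrimitiveRoot g N := zetaC_prim N hNpos.ne'
  have hw : ∀ s : ℤ, zetaC n ^ ((d:ℤ) * s) = g ^ s := by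
    intro s
    rw [zpow_mul, zpow_natCast, zetaC_pow_dvd hn hd0 hd]
  have e1 : ∀ j : ℕ, (-((l + (m:ℤ) * j) * d) : ℤ) = (d:ℤ) * (-(l + m * j)) := by
    intro j; ring
  have e2 : (-(l * d) : ℤ) = (d:ℤ) * (-l) := by ring
  -- divisibility equivalence
  have hdvd_iff : k ∣ d ↔ N ∣ m := by
    constructor
    · rintro ⟨e, rfl⟩
      refine ⟨e, ?_⟩
      have : m * k = N * e * k := by rw [← hnmk, ← hNd]; ring
      exact Nat.eq_of_mul_eq_mul_right (Nat.pos_of_ne_zero hk) this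
    · rintro ⟨t, ht⟩
      refine ⟨t, ?_⟩
      have : N * d = N * (k * t) := by rw [hNd, hnmk, ht]; ring
      have := Nat.eq_of_mul_eq_mul_left hNpos this
      omega
  by_cases hz : z ∈ cycF N
  · -- real case
    have hmem : ∀ s : ℤ, z * zetaC n ^ ((d:ℤ) * s) ∈ cycF N := fun s => by
      rw [hw]; exact mul_mem hz (IntermediateField.pow_mem _ hgm s)
    set F := cycF N
    set zF : F := ⟨z, hz⟩ with hzF
    have huFmem : ∀ s : ℤ, g ^ s ∈ F := fun s => IntermediateField.pow_mem _ hgm s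
    set uF : ℤ → F := fun s => ⟨g ^ s, huFmem s⟩ with huF
    have htr : ∀ s : ℤ, trQ N (z * zetaC n ^ ((d:ℤ) * s)) = Algebra.trace ℚ F (zF * uF s) := by
      intro s
      rw [trQ, dif_pos (hmem s)]
      congr 1
      exact Subtype.ext (by simp [hw, huF, hzF])
    rw [e2]
    simp only [e1, htr]
    rw [← map_sum, ← Finset.mul_sum]
    -- compute the sum of uF
    have hsum : ∑ j ∈ Finset.range k, uF (-(l + (m:ℤ) * j)) =
        (if k ∣ d then (k:ℕ) else 0) • uF (-l) := by
      apply Subtype.ext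
      push_cast [huF]
      have hterm : ∀ j : ℕ, g ^ (-(l + (m:ℤ) * j)) = g ^ (-l) * (g ^ (-(m:ℤ)))^j := by
        intro j
        rw [← zpow_natCast (g ^ (-(m:ℤ))), ← zpow_mul, ← zpow_add₀ hg0]
        ring_nf
      simp only [hterm, ← Finset.mul_sum]
      by_cases hkd : k ∣ d
      · have hNm : N ∣ m := hdvd_iff.mp hkd
        have : g ^ (-(m:ℤ)) = 1 := by
          rw [zpow_neg, zpow_natCast, (hprim.pow_eq_one_iff_dvd m).mpr hNm, inv_one]
        simp [this, hkd, mul_comm]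
      · have hw1 : g ^ (-(m:ℤ)) ≠ 1 := by
          intro h1
          have : g ^ (m:ℤ) = 1 := by
            rw [← inv_inv (g ^ (m:ℤ)), ← zpow_neg, h1, inv_one]
          rw [zpow_natCast] at this
          exact hkd (hdvd_iff.mpr ((hprim.pow_eq_one_iff_dvd m).mp this))
        have hwk : (g ^ (-(m:ℤ))) ^ k = 1 := by
          rw [← zpow_natCast, ← zpow_mul]
          have : (-(m:ℤ)) * k = N * (-(d:ℤ)) := by
            have : (N:ℤ) * d = n := by exact_mod_cast hNd
            have h2 : (m:ℤ) * k = n := by exact_mod_cast hnmk.symm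
            nlinarith [this, h2]
          rw [this, zpow_mul, zpow_natCast, hprim.pow_eq_one, one_zpow]
        rw [geom_sum_eq hw1, hwk]
        simp [hkd]
    rw [hsum, mul_smul_comm, map_nsmul]
    split_ifs with h
    · simp [nsmul_eq_mul]
    · simp
  · -- junk case
    have hnot : ∀ s : ℤ, z * zetaC n ^ ((d:ℤ) * s) ∉ cycF N := by
      intro s hmem
      apply hz
      have h2 : zetaC n ^ ((d:ℤ) * s) ∈ cycF N := by
        rw [hw]; exact IntermediateField.pow_mem _ hgm s
      have h3 : (zetaC n ^ ((d:ℤ) * s))⁻¹ ∈ cycF N := inv_mem h2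
      have : z = z * zetaC n ^ ((d:ℤ) * s) * (zetaC n ^ ((d:ℤ) * s))⁻¹ := by
        rw [mul_assoc, mul_inv_cancel₀ (zpow_ne_zero _ (zetaC_ne_zero n)), mul_one]
      rw [this]
      exact mul_mem hmem h3
    rw [e2]
    simp only [e1]
    have : ∀ s : ℤ, trQ N (z * zetaC n ^ ((d:ℤ) * s)) = 0 := fun s => by
      rw [trQ, dif_neg (hnot s)]
    simp only [this]
    simp

lemma zetaC_zpow_natCast (n : ℕ) (a : ℕ) : zetaC n ^ (a:ℤ) = zetaC n ^ a := zpow_natCast _ _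

lemma roots_toFinset {n m k : ℕ} (hn : n ≠ 0) (hm : m ≠ 0) (hk : k ≠ 0)
    (hnmk : n = m * k) (l : ℤ) :
    ((Polynomial.X ^ k - Polynomial.C (zetaC m ^ l)).roots).toFinset =
      Finset.image (fun j : ℕ => zetaC n ^ (l + (m:ℤ) * j)) (Finset.range k) := by
  have hkpos : 0 < k := Nat.pos_of_ne_zero hk
  have hA : zetaC n ^ ((k:ℤ)) = zetaC m := by
    have hdk : n / k = m := by rw [hnmk, Nat.mul_div_cancel _ hkpos]
    rw [zpow_natCast, zetaC_pow_dvd hn hk ⟨m, by rw [hnmk, mul_comm]⟩, hdk]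
  have hB : zetaC n ^ ((m:ℤ)) = zetaC k := by
    have hdm : n / m = k := by rw [hnmk, Nat.mul_div_cancel_left k (Nat.pos_of_ne_zero hm)]
    rw [zpow_natCast, zetaC_pow_dvd hn hm ⟨k, hnmk⟩, hdm]
  have hC : zetaC n ^ ((n:ℤ)) = 1 := by
    rw [zpow_natCast, (zetaC_prim n hn).pow_eq_one]
  have hpow : ∀ j : ℕ, (zetaC n ^ (l + (m:ℤ) * j)) ^ k = zetaC m ^ l := by
    intro j
    rw [← zpow_natCast (zetaC n ^ (l + (m:ℤ) * j)) k, ← zpow_mul]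
    have : (l + (m:ℤ) * j) * k = (k:ℤ) * l + (n:ℤ) * j := by
      rw [hnmk]; push_cast; ring
    rw [this, zpow_add₀ (zetaC_ne_zero n), zpow_mul, zpow_mul, hA, hC, one_zpow, mul_one]
  ext ξ
  simp only [Multiset.mem_toFinset, Finset.mem_image, Finset.mem_range,
    Polynomial.mem_roots (Polynomial.X_pow_sub_C_ne_zero hkpos _), Polynomial.IsRoot,
    Polynomial.eval_sub, Polynomial.eval_pow, Polynomial.eval_X, Polynomial.eval_C,
    sub_eq_zero]
  constructor
  · intro hξ
    haveI : NeZero k := ⟨hk⟩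
    have hηk : (zetaC n ^ l) ^ k = zetaC m ^ l := by
      rw [← zpow_natCast (zetaC n ^ l) k, ← zpow_mul, mul_comm l (k:ℤ), zpow_mul, hA]
    have h1 : (ξ * (zetaC n ^ l)⁻¹) ^ k = 1 := by
      rw [mul_pow, hξ, inv_pow, hηk, mul_inv_cancel₀ (zpow_ne_zero _ (zetaC_ne_zero m))]
    obtain ⟨i, hik, hi⟩ := (zetaC_prim k hk).eq_pow_of_pow_eq_one h1
    refine ⟨i, hik, ?_⟩
    have : ξ = zetaC n ^ l * zetaC k ^ i := by
      rw [hi]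
      rw [mul_comm, mul_assoc, inv_mul_cancel₀ (zpow_ne_zero _ (zetaC_ne_zero n)), mul_one]
    rw [this, ← hB, ← zpow_natCast (zetaC n ^ ((m:ℤ))) i, ← zpow_mul, ← zpow_add₀ (zetaC_ne_zero n)]
  · rintro ⟨j, hj, rfl⟩
    exact hpow j

lemma divisor_filter_eq {n m k : ℕ} (hm : m ≠ 0) (hk : k ≠ 0) (hnmk : n = m * k) :
    (Nat.divisors n).filter (fun d => k ∣ d) = (Nat.divisors m).image (fun e => e * k) := by
  ext d
  simp only [Finset.mem_filter, Nat.mem_divisors, Finset.mem_image]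
  constructor
  · rintro ⟨⟨hdn, -⟩, e, rfl⟩
    refine ⟨e, ⟨?_, hm⟩, mul_comm e k⟩
    rw [hnmk] at hdn
    obtain ⟨t, ht⟩ := hdn
    exact ⟨t, by
      have : m * k = e * t * k := by rw [ht]; ring
      exact Nat.eq_of_mul_eq_mul_right (Nat.pos_of_ne_zero hk) this⟩
  · rintro ⟨e, ⟨⟨t, ht⟩, -⟩, rfl⟩
    exact ⟨⟨⟨t, by rw [hnmk, ht]; ring⟩, by
      simp [hnmk, hm, hk, Nat.mul_ne_zero]⟩, ⟨e, mul_comm e k⟩⟩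


/-- For `pa ∈ VPA_n(G)`, `m ∣ n` and a character `χ` (ordinary, or Brauer modulo a
prime not dividing `n`), the Luthar–Passi multiplicity of `ζ_m^l` for the power
distribution `pa^{n/m}` is the sum of the multiplicities `μ(ξ, pa, χ)` over the
`ξ` with `ξ^{n/m} = ζ_m^l`. -/
theorem muLP_pow_eq_sum {G : Type} [Group G] [Fintype G]
    (n m : ℕ) (hn : 0 < n) (hm : 0 < m) (hmn : m ∣ n)
    (pa : ℕ → G → ℤ) (hpa : IsVPA n pa) (χ : G → ℂ)
    (hχ : IsOrdChar χ ∨ ∃ p, ∃ hp : p.Prime, ¬ p ∣ n ∧ IsBrauerChar p hp χ)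
    (l : ℤ) :
    muLP m (fun d => pa (d * (n / m))) χ (zetaC m ^ l) =
      ∑ ξ ∈ ((Polynomial.X ^ (n / m) - Polynomial.C (zetaC m ^ l)).roots).toFinset,
        muLP n pa χ ξ := by
  set k := n / m with hkdef
  have hnmk : n = m * k := (Nat.mul_div_cancel' hmn).symm
  have hn0 : n ≠ 0 := hn.ne'
  have hm0 : m ≠ 0 := hm.ne'
  have hk0 : k ≠ 0 := by rintro h; rw [h, mul_zero] at hnmk; exact hn0 hnmk
  have hB : zetaC n ^ ((m:ℤ)) = zetaC k := by
    have hdm : n / m = k := rfl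
    rw [zpow_natCast, zetaC_pow_dvd hn0 hm0 hmn, hdm]
  have hA : zetaC n ^ ((k:ℤ)) = zetaC m := by
    have hdk : n / k = m := by rw [hnmk, Nat.mul_div_cancel _ (Nat.pos_of_ne_zero hk0)]
    rw [zpow_natCast, zetaC_pow_dvd hn0 hk0 ⟨m, by rw [hnmk, mul_comm]⟩, hdk]
  -- rewrite the set of roots
  rw [roots_toFinset hn0 hm0 hk0 hnmk l, Finset.sum_image ?hinj]
  case hinj =>
    intro i hi j hj hij
    rw [Finset.mem_coe, Finset.mem_range] at hi hj
    have hsplit : ∀ j : ℕ, zetaC n ^ (l + (m:ℤ) * j) = zetaC n ^ l * zetaC k ^ j := by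
      intro j
      rw [← hB, ← zpow_natCast (zetaC n ^ ((m:ℤ))) j, ← zpow_mul, ← zpow_add₀ (zetaC_ne_zero n)]
    beta_reduce at hij
    rw [hsplit i, hsplit j] at hij
    exact (zetaC_prim k hk0).pow_inj hi hj
      (mul_left_cancel₀ (zpow_ne_zero _ (zetaC_ne_zero n)) hij)
  -- unfold muLP on the right and push the j-sum inside
  unfold muLP
  conv_rhs => rw [← Finset.mul_sum, Finset.sum_comm]
  have hswap : ∀ c : ConjClasses G,
      ∑ j ∈ Finset.range k, ∑ d ∈ n.divisors,
        (pa d c.out : ℂ) * ((trQ (n / d) (χ c.out * (zetaC n ^ (l + (m:ℤ) * j)) ^ (-(d:ℤ)))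
          : ℚ) : ℂ) =
      ∑ d ∈ n.divisors, (pa d c.out : ℂ) *
        ((if k ∣ d then (k:ℚ) else 0) * trQ (n / d) (χ c.out * zetaC n ^ (-(l * d))) : ℚ) := by
    intro c
    rw [Finset.sum_comm]
    refine Finset.sum_congr rfl fun d hd => ?_
    rw [Nat.mem_divisors] at hd
    have hd0 : d ≠ 0 := by
      rintro rfl
      exact hn0 (Nat.eq_zero_of_zero_dvd hd.1)
    rw [← Finset.mul_sum]
    congr 1
    rw [← trace_sum_lemma hn0 hm0 hk0 hnmk hd.1 hd0 (χ c.out) l]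
    push_cast
    refine Finset.sum_congr rfl fun j hj => ?_
    congr 2
    rw [← zpow_mul]
    congr 1
    ring
  simp only [hswap]
  -- split off the divisibility condition and reindex the divisors
  have hfilter : ∀ c : ConjClasses G,
      ∑ d ∈ n.divisors, (pa d c.out : ℂ) *
        ((if k ∣ d then (k:ℚ) else 0) * trQ (n / d) (χ c.out * zetaC n ^ (-(l * d))) : ℚ) =
      (k : ℂ) * ∑ e ∈ m.divisors, (pa (e * k) c.out : ℂ) *
        ((trQ (m / e) (χ c.out * zetaC n ^ (-(l * (e * k)))) : ℚ) : ℂ) := by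
    intro c
    have : ∀ d ∈ n.divisors, (pa d c.out : ℂ) *
        ((if k ∣ d then (k:ℚ) else 0) * trQ (n / d) (χ c.out * zetaC n ^ (-(l * d))) : ℚ) =
        if k ∣ d then (k : ℂ) * ((pa d c.out : ℂ) *
          (trQ (n / d) (χ c.out * zetaC n ^ (-(l * d))) : ℚ)) else 0 := by
      intro d _
      split_ifs with h
      · push_cast; ring
      · push_cast; ring
    rw [Finset.sum_congr rfl this, ← Finset.sum_filter, divisor_filter_eq hm0 hk0 hnmk,
      Finset.sum_image (fun x _ y _ h => Nat.eq_of_mul_eq_mul_right (Nat.pos_of_ne_zero hk0) h),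
      ← Finset.mul_sum]
    congr 1
    refine Finset.sum_congr rfl fun e he => ?_
    rw [Nat.mem_divisors] at he
    have hmek : n / (e * k) = m / e := by
      rw [hnmk, Nat.mul_div_mul_right _ _ (Nat.pos_of_ne_zero hk0)]
    have hexp : (-(l * ((e * k : ℕ) : ℤ))) = -(l * ((e:ℤ) * k)) := by push_cast; ring
    rw [hmek, hexp]
  simp only [hfilter]
  -- now both sides over m.divisors
  conv_rhs => rw [← Finset.mul_sum, ← mul_assoc]
  have hscal : (n : ℂ)⁻¹ * (k : ℂ) = (m : ℂ)⁻¹ := by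
    have : (n : ℂ) = (m : ℂ) * (k : ℂ) := by exact_mod_cast congrArg (Nat.cast : ℕ → ℂ) hnmk
    have hmc : (m:ℂ) ≠ 0 := Nat.cast_ne_zero.2 hm0
    have hkc : (k:ℂ) ≠ 0 := Nat.cast_ne_zero.2 hk0
    rw [this]
    field_simp
  rw [hscal]
  congr 1
  refine Finset.sum_congr rfl fun c _ => Finset.sum_congr rfl fun e he => ?_
  rw [Nat.mem_divisors] at he
  congr 2
  · rw [← hA, ← zpow_mul, ← zpow_mul]
    congr 1
    push_cast
    ring

end
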